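/- Let p > 1, let n_A, n_B, n ≥ 1 be integers, and let U ⊆ ℂ^{n_A} ⊗ ℂ^{n_B} be a nonzero subspace. Let Ū denote the subspace of entrywise complex conjugates (with respect to the standard product basis) of vectors of U, and view U ⊗ Ū as a subspace of ℂ^{n_A²} ⊗ ℂ^{n_B²} via the regrouping isomorphism (ℂ^{n_A} ⊗ ℂ^{n_B}) ⊗ (ℂ^{n_A} ⊗ ℂ^{n_B}) ≅ (ℂ^{n_A} ⊗ ℂ^{n_A}) ⊗ (ℂ^{n_B} ⊗ ℂ^{n_B}). Then H_{min,p}(U ⊗ Ū) ≤ (p/(1−p)) · log₂(dim(U)/(n_A · n_B)). -/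

import Mathlib

/-
Common definitions.

We model the tensor product `ℂ^{n₁} ⊗ ⋯ ⊗ ℂ^{n_m}` concretely as
`EuclideanSpace ℂ (∀ i, Fin (n i))` (coordinates with respect to the standard
product basis), and the `d`-fold tensor power `(ℂ^a)^{⊗ d}` as
`EuclideanSpace ℂ (ι → Fin a)` for an index type `ι` of cardinality `d`.
-/

noncomputable section

open Finset

/-- The product (elementary tensor) vector `φ₁ ⊗ ⋯ ⊗ φ_m` in a multipartite space,
in coordinates. -/
def prodVec {m : ℕ} {n : Fin m → ℕ} (φ : ∀ i, EuclideanSpace ℂ (Fin (n i))) :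
    EuclideanSpace ℂ (∀ i, Fin (n i)) :=
  WithLp.toLp 2 (fun v => ∏ i, φ i (v i))

/-- The product vector `φ₁ ⊗ ⋯ ⊗ φ_m` in `(ℂ^n)^{⊗ m}`, in coordinates. -/
def prodVecC {m n : ℕ} (φ : Fin m → EuclideanSpace ℂ (Fin n)) :
    EuclideanSpace ℂ (Fin m → Fin n) :=
  WithLp.toLp 2 (fun v => ∏ i, φ i (v i))

/-- The product vector `φ₁ ⊗ φ₂` in a bipartite space, in coordinates. -/
def prodVec2 {ι₁ ι₂ : Type*} (φ₁ : EuclideanSpace ℂ ι₁) (φ₂ : EuclideanSpace ℂ ι₂) :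
    EuclideanSpace ℂ (ι₁ × ι₂) :=
  WithLp.toLp 2 (fun p => φ₁ p.1 * φ₂ p.2)

/-- Geometric measure of entanglement of a subspace of a multipartite space:
`E(U) = inf { 1 - ⟨φ₁⊗⋯⊗φ_m, Π_U (φ₁⊗⋯⊗φ_m)⟩ : ‖φ_i‖ = 1 }`, where we use that
`⟨x, Π_U x⟩ = ‖Π_U x‖²`. -/
def gme {m : ℕ} {n : Fin m → ℕ} (U : Submodule ℂ (EuclideanSpace ℂ (∀ i, Fin (n i)))) : ℝ :=
  sInf {x | ∃ φ : ∀ i, EuclideanSpace ℂ (Fin (n i)),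
    (∀ i, ‖φ i‖ = 1) ∧ x = 1 - ‖U.orthogonalProjectionOnto (prodVec φ)‖ ^ 2}

/-- Geometric measure of entanglement of a subspace of `(ℂ^n)^{⊗ m}`. -/
def gmeC {m n : ℕ} (U : Submodule ℂ (EuclideanSpace ℂ (Fin m → Fin n))) : ℝ :=
  sInf {x | ∃ φ : Fin m → EuclideanSpace ℂ (Fin n),
    (∀ i, ‖φ i‖ = 1) ∧ x = 1 - ‖U.orthogonalProjectionOnto (prodVecC φ)‖ ^ 2}

/-- Geometric measure of entanglement of a subspace of a bipartite space. -/
def gme2 {ι₁ ι₂ : Type*} [Fintype ι₁] [Fintype ι₂]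
    (U : Submodule ℂ (EuclideanSpace ℂ (ι₁ × ι₂))) : ℝ :=
  sInf {x | ∃ (φ₁ : EuclideanSpace ℂ ι₁) (φ₂ : EuclideanSpace ℂ ι₂),
    ‖φ₁‖ = 1 ∧ ‖φ₂‖ = 1 ∧ x = 1 - ‖U.orthogonalProjectionOnto (prodVec2 φ₁ φ₂)‖ ^ 2}

/-- The symmetric subspace `S^{|ι|}(ℂ^a)` of `(ℂ^a)^{⊗ ι}`: tensors invariant under all
permutations of the tensor factors. -/
def symmSub (a : ℕ) (ι : Type*) : Submodule ℂ (EuclideanSpace ℂ (ι → Fin a)) where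
  carrier := {ψ | ∀ σ : Equiv.Perm ι, ∀ v : ι → Fin a, ψ (v ∘ σ) = ψ v}
  zero_mem' := fun _ _ => rfl
  add_mem' := by
    intro x y hx hy σ v
    show x (v ∘ σ) + y (v ∘ σ) = x v + y v
    rw [hx σ v, hy σ v]
  smul_mem' := by
    intro c x hx σ v
    show c * x (v ∘ σ) = c * x v
    rw [hx σ v]

/-- Splitting an index `v : Fin d ⊕ Fin d → Fin a` into a pair of indices, realizing
`(ℂ^a)^{⊗ 2d} ≅ (ℂ^a)^{⊗ d} ⊗ (ℂ^a)^{⊗ d}`. -/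
def pairSplit {a d : ℕ} (v : (Fin d ⊕ Fin d) → Fin a) : (Fin d → Fin a) × (Fin d → Fin a) :=
  (v ∘ Sum.inl, v ∘ Sum.inr)

/-- The symmetric subspace `S^{2d}(ℂ^a)`, viewed inside
`(ℂ^a)^{⊗ d} ⊗ (ℂ^a)^{⊗ d} = EuclideanSpace ℂ ((Fin d → Fin a) × (Fin d → Fin a))`. -/
def symmSub2 (a d : ℕ) :
    Submodule ℂ (EuclideanSpace ℂ ((Fin d → Fin a) × (Fin d → Fin a))) where
  carrier := {ψ | ∀ σ : Equiv.Perm (Fin d ⊕ Fin d), ∀ v : (Fin d ⊕ Fin d) → Fin a,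
    ψ (pairSplit (v ∘ σ)) = ψ (pairSplit v)}
  zero_mem' := fun _ _ => rfl
  add_mem' := by
    intro x y hx hy σ v
    show x (pairSplit (v ∘ σ)) + y (pairSplit (v ∘ σ)) = x (pairSplit v) + y (pairSplit v)
    rw [hx σ v, hy σ v]
  smul_mem' := by
    intro c x hx σ v
    show c * x (pairSplit (v ∘ σ)) = c * x (pairSplit v)
    rw [hx σ v]

/-- The tensor product `W₁ ⊗ W₂` of subspaces, as the span of the elementary tensors,
inside the concrete bipartite space. -/
def tensorPairs {ι₁ ι₂ : Type*} [Fintype ι₁] [Fintype ι₂]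
    (W₁ : Submodule ℂ (EuclideanSpace ℂ ι₁)) (W₂ : Submodule ℂ (EuclideanSpace ℂ ι₂)) :
    Submodule ℂ (EuclideanSpace ℂ (ι₁ × ι₂)) :=
  Submodule.span ℂ {χ | ∃ ψ ∈ W₁, ∃ φ ∈ W₂, χ = prodVec2 ψ φ}

/-- The tensor product `U ⊗ V` of two bipartite subspaces
`U, V ⊆ ℂ^{ι₁} ⊗ ℂ^{ι₂}`, viewed as a bipartite subspace of
`(ℂ^{ι₁} ⊗ ℂ^{ι₁}) ⊗ (ℂ^{ι₂} ⊗ ℂ^{ι₂})` via the regrouping isomorphism that swaps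
the middle two tensor factors. -/
def tensorSub {ι₁ ι₂ : Type*} [Fintype ι₁] [Fintype ι₂]
    (U V : Submodule ℂ (EuclideanSpace ℂ (ι₁ × ι₂))) :
    Submodule ℂ (EuclideanSpace ℂ ((ι₁ × ι₁) × (ι₂ × ι₂))) :=
  Submodule.span ℂ {χ | ∃ ψ ∈ U, ∃ φ ∈ V,
    χ = WithLp.toLp 2 (fun p => ψ (p.1.1, p.2.1) * φ (p.1.2, p.2.2))}

/-- Entrywise complex conjugate of a vector, with respect to the standard basis. -/
def conjVec {ι : Type*} (ψ : EuclideanSpace ℂ ι) : EuclideanSpace ℂ ι :=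
  WithLp.toLp 2 (fun v => starRingEnd ℂ (ψ v))

/-- The subspace `Ū` of entrywise complex conjugates of vectors of `U`. -/
def conjSubmodule {ι : Type*} (U : Submodule ℂ (EuclideanSpace ℂ ι)) :
    Submodule ℂ (EuclideanSpace ℂ ι) where
  carrier := conjVec '' U
  zero_mem' := ⟨0, U.zero_mem, by
    ext v; show starRingEnd ℂ 0 = 0; exact map_zero _⟩
  add_mem' := by
    rintro a b ⟨x, hx, rfl⟩ ⟨y, hy, rfl⟩
    exact ⟨x + y, U.add_mem hx hy, by
      ext v; exact map_add (starRingEnd ℂ) (x v) (y v)⟩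
  smul_mem' := by
    rintro c a ⟨x, hx, rfl⟩
    refine ⟨starRingEnd ℂ c • x, U.smul_mem _ hx, ?_⟩
    ext v
    show starRingEnd ℂ (starRingEnd ℂ c * x v) = c * starRingEnd ℂ (x v)
    simp

/-- The content (type) of a word `w : Fin d → Fin a`: the vector `α ∈ ℤ_{≥0}^a`
recording how many times each letter occurs. -/
def wordContent {a d : ℕ} (w : Fin d → Fin a) : Fin a → ℕ :=
  fun i => (Finset.univ.filter fun j => w j = i).card

/-- The monomial orthonormal basis vector `|α⟩ = C(d,α)^{1/2} Π_{S^d(ℂ^a)} (e₁^{⊗α₁} ⊗ ⋯ ⊗ e_a^{⊗α_a})`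
of the symmetric subspace `S^d(ℂ^a)`, where `α = wordContent w` and
`e₁^{⊗α₁} ⊗ ⋯ ⊗ e_a^{⊗α_a}` is the standard basis vector of `(ℂ^a)^{⊗ d}` indexed by any word `w`
of content `α` (the projection does not depend on the choice of such a word). -/
def monVec (a d : ℕ) (w : Fin d → Fin a) : EuclideanSpace ℂ (Fin d → Fin a) :=
  (Real.sqrt (Nat.multinomial Finset.univ (wordContent w)) : ℂ) •
    ((symmSub a (Fin d)).orthogonalProjectionOnto (EuclideanSpace.single w 1) :
      EuclideanSpace ℂ (Fin d → Fin a))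

/-- The squared Schmidt coefficients of a bipartite vector `ψ`, i.e. the eigenvalues of
`M Mᴴ` where `M` is the coefficient matrix of `ψ`. -/
def schmidtSqCoeffs {ι₁ ι₂ : Type*} [Fintype ι₁] [Fintype ι₂] [DecidableEq ι₁]
    (ψ : EuclideanSpace ℂ (ι₁ × ι₂)) : ι₁ → ℝ :=
  (Matrix.isHermitian_mul_conjTranspose_self (Matrix.of fun i j => ψ (i, j))).eigenvalues

/-- The Rényi `p`-entropy of (the squared Schmidt coefficients of) a bipartite vector. -/
def renyiEnt (p : ℝ) {ι₁ ι₂ : Type*} [Fintype ι₁] [Fintype ι₂] [DecidableEq ι₁]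
    (ψ : EuclideanSpace ℂ (ι₁ × ι₂)) : ℝ :=
  (1 / (1 - p)) * Real.logb 2 (∑ i, schmidtSqCoeffs ψ i ^ p)

/-- The minimum output Rényi `p`-entropy of a bipartite subspace. -/
def hminEnt (p : ℝ) {ι₁ ι₂ : Type*} [Fintype ι₁] [Fintype ι₂] [DecidableEq ι₁]
    (U : Submodule ℂ (EuclideanSpace ℂ (ι₁ × ι₂))) : ℝ :=
  sInf {x | ∃ ψ ∈ U, ‖ψ‖ = 1 ∧ x = renyiEnt p ψ}

end


-- ======================= Auxiliary lemmas =======================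

open Matrix in
lemma aux_eig_trace {n : Type*} [Fintype n] [DecidableEq n] {A : Matrix n n ℂ}
    (hA : A.IsHermitian) : ∑ i, (hA.eigenvalues i : ℂ) = A.trace := by
  exact hA.trace_eq_sum_eigenvalues.symm

open Finset Matrix in
lemma aux_rayleigh {n : Type*} [Fintype n] [DecidableEq n] [Nonempty n]
    {A : Matrix n n ℂ} (hA : A.IsHermitian) (u : n → ℂ)
    (hu : ∑ i, Complex.normSq (u i) = 1) :
    ∃ j, (dotProduct (star u) (A *ᵥ u)).re ≤ hA.eigenvalues j := by
  classical
  set uE : EuclideanSpace ℂ n := (WithLp.equiv 2 (n → ℂ)).symm u with huE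
  set b := hA.eigenvectorBasis with hb
  set w : n → ℝ := fun j => Complex.normSq (inner (𝕜 := ℂ) (b j) uE) with hw
  have hwnn : ∀ j, 0 ≤ w j := fun j => Complex.normSq_nonneg _
  have h8 : ∀ j, (inner (𝕜 := ℂ) uE (b j)) * (inner (𝕜 := ℂ) (b j) uE) = ((w j : ℝ) : ℂ) := by
    intro j
    rw [← inner_conj_symm uE (b j)]
    exact (Complex.normSq_eq_conj_mul_self).symm
  have hpars : ∑ j, w j = 1 := by
    have h1 : ∑ j, (inner (𝕜 := ℂ) uE (b j)) * (inner (𝕜 := ℂ) (b j) uE)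
        = inner (𝕜 := ℂ) uE uE := b.sum_inner_mul_inner uE uE
    have h3 : inner (𝕜 := ℂ) uE uE = (1 : ℂ) := by
      simp only [PiLp.inner_apply, RCLike.inner_apply]
      have : ∀ i, uE i * (starRingEnd ℂ) (uE i) = (Complex.normSq (u i) : ℂ) :=
        fun i => Complex.mul_conj _
      rw [Finset.sum_congr rfl fun i _ => this i, ← Complex.ofReal_sum, hu, Complex.ofReal_one]
    rw [Finset.sum_congr rfl fun j _ => h8 j, h3, ← Complex.ofReal_sum] at h1
    exact_mod_cast h1
  have hray : (dotProduct (star u) (A *ᵥ u)).re = ∑ j, hA.eigenvalues j * w j := by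
    have hmain : dotProduct (star u) (A *ᵥ u)
        = ∑ j, ((hA.eigenvalues j * w j : ℝ) : ℂ) := by
      have hd : dotProduct (star u) (A *ᵥ u)
          = inner (𝕜 := ℂ) uE ((WithLp.equiv 2 (n → ℂ)).symm (A *ᵥ u)) := by
        simp only [PiLp.inner_apply, RCLike.inner_apply, dotProduct]
        exact Finset.sum_congr rfl fun i _ => mul_comm _ _
      rw [hd, ← b.sum_inner_mul_inner]
      refine Finset.sum_congr rfl fun j _ => ?_
      have h5 : star (⇑(b j)) ᵥ* A = (hA.eigenvalues j : ℂ) • star (⇑(b j)) := by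
        have h5a := congrArg star (hA.mulVec_eigenvectorBasis j)
        rw [Matrix.star_mulVec, show Aᴴ = A from hA] at h5a
        rw [hb, h5a, star_smul]
        simp
      have h6 : inner (𝕜 := ℂ) (b j) ((WithLp.equiv 2 (n → ℂ)).symm (A *ᵥ u))
          = dotProduct (star (⇑(b j))) (A *ᵥ u) := by
        simp only [PiLp.inner_apply, RCLike.inner_apply, dotProduct]
        exact Finset.sum_congr rfl fun i _ => mul_comm _ _
      have h7 : inner (𝕜 := ℂ) (b j) uE = dotProduct (star (⇑(b j))) u := by
        simp only [PiLp.inner_apply, RCLike.inner_apply, dotProduct]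
        exact Finset.sum_congr rfl fun i _ => mul_comm _ _
      have hbj : inner (𝕜 := ℂ) (b j) ((WithLp.equiv 2 (n → ℂ)).symm (A *ᵥ u))
          = (hA.eigenvalues j : ℂ) * inner (𝕜 := ℂ) (b j) uE := by
        rw [h6, h7, dotProduct_mulVec, h5, smul_dotProduct, smul_eq_mul]
      rw [hbj, mul_left_comm, h8 j]
      push_cast
      ring
    rw [hmain, ← Complex.ofReal_sum, Complex.ofReal_re]
  obtain ⟨j0, _, hj0⟩ := Finset.exists_max_image Finset.univ hA.eigenvalues
    ⟨Classical.arbitrary n, Finset.mem_univ _⟩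
  refine ⟨j0, ?_⟩
  rw [hray]
  calc ∑ j, hA.eigenvalues j * w j ≤ ∑ j, hA.eigenvalues j0 * w j :=
        Finset.sum_le_sum fun j _ => mul_le_mul_of_nonneg_right (hj0 j (Finset.mem_univ j)) (hwnn j)
    _ = hA.eigenvalues j0 := by rw [← Finset.mul_sum, hpars, mul_one]

open Matrix in
lemma aux_cs {n : Type*} [Fintype n] (x y : n → ℂ) :
    Complex.normSq (dotProduct (star x) y)
      ≤ (∑ i, Complex.normSq (x i)) * (∑ i, Complex.normSq (y i)) := by
  set xE : EuclideanSpace ℂ n := (WithLp.equiv 2 (n → ℂ)).symm x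
  set yE : EuclideanSpace ℂ n := (WithLp.equiv 2 (n → ℂ)).symm y
  have h1 : dotProduct (star x) y = inner (𝕜 := ℂ) xE yE := by
    simp only [PiLp.inner_apply, RCLike.inner_apply, dotProduct]
    exact Finset.sum_congr rfl fun i _ => mul_comm _ _
  have h2 := norm_inner_le_norm (𝕜 := ℂ) xE yE
  have h3 : ∀ (z : n → ℂ), ‖(WithLp.equiv 2 (n → ℂ)).symm z‖ ^ 2 = ∑ i, Complex.normSq (z i) := by
    intro z
    rw [EuclideanSpace.norm_eq, Real.sq_sqrt (by positivity)]
    exact Finset.sum_congr rfl fun i _ => (Complex.sq_norm _)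
  have h4 : Complex.normSq (inner (𝕜 := ℂ) xE yE) = ‖(inner (𝕜 := ℂ) xE yE : ℂ)‖ ^ 2 := by
    rw [← Complex.sq_norm]
  rw [h1, h4, ← h3 x, ← h3 y]
  calc ‖(inner (𝕜 := ℂ) xE yE : ℂ)‖ ^ 2 ≤ (‖xE‖ * ‖yE‖) ^ 2 := by
        apply pow_le_pow_left₀ (norm_nonneg _) h2
    _ = ‖xE‖ ^ 2 * ‖yE‖ ^ 2 := by ring

open Matrix in
lemma aux_schmidt_sum {ι₁ ι₂ : Type*} [Fintype ι₁] [Fintype ι₂] [DecidableEq ι₁]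
    (ψ : EuclideanSpace ℂ (ι₁ × ι₂)) :
    ∑ i, schmidtSqCoeffs ψ i = ∑ q : ι₁ × ι₂, Complex.normSq (ψ q) := by
  have h1 := aux_eig_trace (Matrix.isHermitian_mul_conjTranspose_self (Matrix.of fun i j => ψ (i, j)))
  have h2 : (Matrix.of (fun i j => ψ (i, j)) * (Matrix.of fun i j => ψ (i, j))ᴴ).trace
      = ((∑ q : ι₁ × ι₂, Complex.normSq (ψ q) : ℝ) : ℂ) := by
    simp only [Matrix.trace, Matrix.diag, Matrix.mul_apply, Matrix.conjTranspose_apply,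
      Matrix.of_apply, Complex.ofReal_sum, Fintype.sum_prod_type]
    exact Finset.sum_congr rfl fun i _ => Finset.sum_congr rfl fun j _ =>
      (Complex.mul_conj _)
  rw [h2] at h1
  exact_mod_cast h1

lemma aux_schmidt_sum_one {ι₁ ι₂ : Type*} [Fintype ι₁] [Fintype ι₂] [DecidableEq ι₁]
    (ψ : EuclideanSpace ℂ (ι₁ × ι₂)) (hψ : ‖ψ‖ = 1) :
    ∑ i, schmidtSqCoeffs ψ i = 1 := by
  rw [aux_schmidt_sum]
  have := EuclideanSpace.norm_eq ψ
  rw [hψ] at this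
  have h2 : ∑ q : ι₁ × ι₂, ‖ψ q‖ ^ 2 = 1 := by
    rw [eq_comm, Real.sqrt_eq_one] at this
    rwa [Fintype.sum_congr _ _ fun q => rfl] at this
  rw [← h2]
  exact Finset.sum_congr rfl fun q _ => (Complex.sq_norm _).symm

lemma aux_schmidt_nonneg {ι₁ ι₂ : Type*} [Fintype ι₁] [Fintype ι₂] [DecidableEq ι₁]
    (ψ : EuclideanSpace ℂ (ι₁ × ι₂)) (i : ι₁) : 0 ≤ schmidtSqCoeffs ψ i :=
  Matrix.eigenvalues_self_mul_conjTranspose_nonneg _ _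

lemma aux_renyi_nonneg {p : ℝ} (hp : 1 < p) {ι₁ ι₂ : Type*} [Fintype ι₁] [Fintype ι₂]
    [DecidableEq ι₁] (ψ : EuclideanSpace ℂ (ι₁ × ι₂)) (hψ : ‖ψ‖ = 1) :
    0 ≤ renyiEnt p ψ := by
  have hsum := aux_schmidt_sum_one ψ hψ
  have hle1 : ∀ i, schmidtSqCoeffs ψ i ≤ 1 := by
    intro i
    rw [← hsum]
    exact Finset.single_le_sum (fun j _ => aux_schmidt_nonneg ψ j) (Finset.mem_univ i)
  have hple : ∑ i, schmidtSqCoeffs ψ i ^ p ≤ 1 := by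
    rw [← hsum]
    refine Finset.sum_le_sum fun i _ => ?_
    rcases eq_or_lt_of_le (aux_schmidt_nonneg ψ i) with h | h
    · rw [← h, Real.zero_rpow (by positivity)]
    · calc schmidtSqCoeffs ψ i ^ p ≤ schmidtSqCoeffs ψ i ^ (1:ℝ) :=
            Real.rpow_le_rpow_of_exponent_ge h (hle1 i) (le_of_lt hp)
        _ = schmidtSqCoeffs ψ i := Real.rpow_one _
  have hpnn : 0 ≤ ∑ i, schmidtSqCoeffs ψ i ^ p :=
    Finset.sum_nonneg fun i _ => Real.rpow_nonneg (aux_schmidt_nonneg ψ i) p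
  have hlog : Real.logb 2 (∑ i, schmidtSqCoeffs ψ i ^ p) ≤ 0 :=
    Real.logb_nonpos (by norm_num) hpnn hple
  have hcoef : (1 : ℝ) / (1 - p) ≤ 0 := by
    apply div_nonpos_of_nonneg_of_nonpos <;> linarith
  unfold renyiEnt
  nlinarith [mul_nonneg (neg_nonneg.mpr hcoef) (neg_nonneg.mpr hlog)]

/-- For a nonzero subspace `U ⊆ ℂ^{n_A} ⊗ ℂ^{n_B}`,
`H_{min,p}(U ⊗ Ū) ≤ (p/(1−p)) log₂(dim U/(n_A n_B))`, where `U ⊗ Ū` is regrouped as a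
bipartite subspace of `(ℂ^{n_A} ⊗ ℂ^{n_A}) ⊗ (ℂ^{n_B} ⊗ ℂ^{n_B})`. -/
theorem stmt12 (p : ℝ) (hp : 1 < p) (nA nB : ℕ) (hA : 1 ≤ nA) (hB : 1 ≤ nB)
    (U : Submodule ℂ (EuclideanSpace ℂ (Fin nA × Fin nB))) (hU : U ≠ ⊥) :
    hminEnt p (tensorSub U (conjSubmodule U)) ≤
      (p / (1 - p)) * Real.logb 2 ((Module.finrank ℂ U : ℝ) / (nA * nB)) := by
  classical
  haveI : Nontrivial U := Submodule.nontrivial_iff_ne_bot.mpr hU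
  set d := Module.finrank ℂ U with hdd
  have hd : 0 < d := Module.finrank_pos
  set b := stdOrthonormalBasis ℂ U with hbdef
  set ψ : Fin d → EuclideanSpace ℂ (Fin nA × Fin nB) := fun k => ((b k : U) : EuclideanSpace ℂ (Fin nA × Fin nB)) with hψdef
  have hortho : ∀ k l, inner (𝕜 := ℂ) (ψ k) (ψ l) = if k = l then (1:ℂ) else 0 := by
    intro k l
    simp only [hψdef]
    rw [← Submodule.coe_inner]
    exact orthonormal_iff_ite.mp b.orthonormal k l
  have hg : ∀ k l, (∑ a : Fin nA, ∑ cc : Fin nB, (starRingEnd ℂ) (ψ k (a,cc)) * ψ l (a,cc))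
      = if k = l then (1:ℂ) else 0 := by
    intro k l
    have h := hortho k l
    simp only [PiLp.inner_apply, RCLike.inner_apply, Fintype.sum_prod_type] at h
    rw [← h]; exact Finset.sum_congr rfl fun a _ => Finset.sum_congr rfl fun cc _ => mul_comm _ _
  have hh : ∀ k l, (∑ a : Fin nA, ∑ cc : Fin nB, ψ k (a,cc) * (starRingEnd ℂ) (ψ l (a,cc)))
      = if k = l then (1:ℂ) else 0 := by
    intro k l
    have h := congrArg (starRingEnd ℂ) (hg k l)
    simpa [apply_ite (starRingEnd ℂ), mul_comm] using h
  set f : Fin d → EuclideanSpace ℂ ((Fin nA × Fin nA) × (Fin nB × Fin nB)) :=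
    fun k => WithLp.toLp 2 (fun q : (Fin nA × Fin nA) × (Fin nB × Fin nB) => ψ k (q.1.1, q.2.1) * (starRingEnd ℂ) (ψ k (q.1.2, q.2.2))) with hfdef
  have hf : ∀ k l, inner (𝕜 := ℂ) (f k) (f l) = if k = l then (1:ℂ) else 0 := by
    intro k l
    have key : ∀ (g h : Fin nA → Fin nB → ℂ),
        (∑ i : Fin nA, ∑ i' : Fin nA, ∑ j : Fin nB, ∑ j' : Fin nB, g i j * h i' j')
          = (∑ i : Fin nA, ∑ j : Fin nB, g i j) * (∑ i' : Fin nA, ∑ j' : Fin nB, h i' j') := by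
      intro g h
      rw [Finset.sum_mul_sum]
      exact Finset.sum_congr rfl fun i _ => Finset.sum_congr rfl fun i' _ =>
        (Finset.sum_mul_sum _ _ _ _).symm
    rw [PiLp.inner_apply]
    simp only [RCLike.inner_apply, hfdef, Fintype.sum_prod_type, WithLp.ofLp_toLp]
    calc (∑ i : Fin nA, ∑ i' : Fin nA, ∑ j : Fin nB, ∑ j' : Fin nB,
          (ψ l (i, j) * (starRingEnd ℂ) (ψ l (i', j'))) *
            (starRingEnd ℂ) (ψ k (i, j) * (starRingEnd ℂ) (ψ k (i', j'))))
        = ∑ i : Fin nA, ∑ i' : Fin nA, ∑ j : Fin nB, ∑ j' : Fin nB,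
            (((starRingEnd ℂ) (ψ k (i, j)) * ψ l (i, j)) *
              (ψ k (i', j') * (starRingEnd ℂ) (ψ l (i', j')))) := by
          refine Finset.sum_congr rfl fun i _ => Finset.sum_congr rfl fun i' _ =>
            Finset.sum_congr rfl fun j _ => Finset.sum_congr rfl fun j' _ => ?_
          simp only [map_mul, Complex.conj_conj]
          ring
      _ = (∑ i : Fin nA, ∑ j : Fin nB, (starRingEnd ℂ) (ψ k (i, j)) * ψ l (i, j)) *
            (∑ i' : Fin nA, ∑ j' : Fin nB, ψ k (i', j') * (starRingEnd ℂ) (ψ l (i', j'))) :=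
          key _ _
      _ = (if k = l then (1:ℂ) else 0) * (if k = l then (1:ℂ) else 0) := by rw [hg k l, hh k l]
      _ = (if k = l then (1:ℂ) else 0) := by split_ifs <;> simp
  set c : ℂ := Complex.ofReal (Real.sqrt d)⁻¹ with hcdef
  set χ : EuclideanSpace ℂ ((Fin nA × Fin nA) × (Fin nB × Fin nB)) := c • ∑ k, f k with hχdef
  have hsum2 : inner (𝕜 := ℂ) (∑ k, f k) (∑ l, f l) = (d:ℂ) := by
    simp only [sum_inner, inner_sum, hf]
    simp [Finset.sum_ite_eq]
  have hinner : inner (𝕜 := ℂ) χ χ = 1 := by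
    rw [hχdef, inner_smul_left, inner_smul_right, hsum2, hcdef, Complex.conj_ofReal]
    have hc : ((Real.sqrt d)⁻¹ : ℝ) * ((Real.sqrt d)⁻¹ * (d:ℝ)) = 1 := by
      rw [← mul_assoc, ← mul_inv, Real.mul_self_sqrt (by positivity)]
      field_simp
    have h2 : (Complex.ofReal (Real.sqrt d)⁻¹) * ((Complex.ofReal (Real.sqrt d)⁻¹) * (d:ℂ))
        = Complex.ofReal ((Real.sqrt d)⁻¹ * ((Real.sqrt d)⁻¹ * (d:ℝ))) := by push_cast; ring
    rw [h2, hc, Complex.ofReal_one]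
  have hnorm : ‖χ‖ = 1 := by
    have h2 : ‖χ‖ ^ 2 = 1 := by
      rw [← inner_self_eq_norm_sq (𝕜 := ℂ) χ, hinner]
      simp
    nlinarith [norm_nonneg χ]
  have hmem : χ ∈ tensorSub U (conjSubmodule U) := by
    apply Submodule.smul_mem
    apply Submodule.sum_mem
    intro k _
    apply Submodule.subset_span
    exact ⟨ψ k, (b k).2, conjVec (ψ k), ⟨ψ k, (b k).2, rfl⟩, rfl⟩
  have hψnorm : ∀ k, (∑ a : Fin nA, ∑ cc : Fin nB, Complex.normSq (ψ k (a, cc))) = 1 := by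
    intro k
    have h := hg k k
    rw [if_pos rfl] at h
    have h2 : ∀ (a : Fin nA) (cc : Fin nB), (starRingEnd ℂ) (ψ k (a,cc)) * ψ k (a,cc)
        = (Complex.normSq (ψ k (a,cc)) : ℂ) := fun a cc => (Complex.normSq_eq_conj_mul_self).symm
    rw [Finset.sum_congr rfl fun a _ => Finset.sum_congr rfl fun cc _ => h2 a cc] at h
    exact_mod_cast h
  set rA : ℝ := (Real.sqrt nA)⁻¹ with hrA
  set rB : ℝ := (Real.sqrt nB)⁻¹ with hrB
  set uu : (Fin nA × Fin nA) → ℂ := fun i => if i.1 = i.2 then Complex.ofReal rA else 0 with huu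
  set vv : (Fin nB × Fin nB) → ℂ := fun j => if j.1 = j.2 then Complex.ofReal rB else 0 with hvv
  have hA0 : (0:ℝ) < nA := by exact_mod_cast hA
  have hB0 : (0:ℝ) < nB := by exact_mod_cast hB
  have hu1 : ∑ i, Complex.normSq (uu i) = 1 := by
    simp only [huu, Fintype.sum_prod_type, apply_ite Complex.normSq, Complex.normSq_ofReal,
      map_zero, Finset.sum_ite_eq, Finset.mem_univ, if_true, Finset.sum_const,
      Finset.card_univ, Fintype.card_fin, nsmul_eq_mul]
    rw [hrA, ← mul_inv, Real.mul_self_sqrt (le_of_lt hA0)]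
    field_simp
  have hv1 : ∑ j, Complex.normSq (vv j) = 1 := by
    simp only [hvv, Fintype.sum_prod_type, apply_ite Complex.normSq, Complex.normSq_ofReal,
      map_zero, Finset.sum_ite_eq, Finset.mem_univ, if_true, Finset.sum_const,
      Finset.card_univ, Fintype.card_fin, nsmul_eq_mul]
    rw [hrB, ← mul_inv, Real.mul_self_sqrt (le_of_lt hB0)]
    field_simp
  set M : Matrix (Fin nA × Fin nA) (Fin nB × Fin nB) ℂ := Matrix.of fun i j => χ (i, j) with hM
  have hχvalue : ∀ (a : Fin nA) (cc : Fin nB),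
      χ ((a,a),(cc,cc)) = c * ∑ k, (Complex.normSq (ψ k (a, cc)) : ℂ) := by
    intro a cc
    have h0 : χ ((a,a),(cc,cc)) = c * ∑ k, f k ((a,a),(cc,cc)) := by
      rw [hχdef]
      rw [PiLp.smul_apply, smul_eq_mul]
      congr 1
      rw [WithLp.ofLp_sum]; exact Finset.sum_apply _ _ _
    rw [h0]
    congr 1
    refine Finset.sum_congr rfl fun k _ => ?_
    rw [hfdef]
    exact (Complex.mul_conj _)
  have hs : dotProduct (star vv) (Matrix.mulVec M.conjTranspose uu)
      = Complex.ofReal (rB * (rA * ((Real.sqrt d)⁻¹ * d))) := by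
    simp only [dotProduct, Matrix.mulVec, hM, Matrix.of_apply, Matrix.conjTranspose_apply,
      Pi.star_apply, RCLike.star_def, huu, hvv, mul_ite, mul_zero, ite_mul, zero_mul,
      apply_ite (starRingEnd ℂ), map_zero, Complex.conj_ofReal,
      Fintype.sum_prod_type, Finset.sum_ite_eq, Finset.mem_univ, if_true]
    have hconj : ∀ (a : Fin nA) (bb : Fin nB), (starRingEnd ℂ) (χ ((a,a),(bb,bb)))
        = c * ∑ k, (Complex.normSq (ψ k (a, bb)) : ℂ) := by
      intro a bb
      rw [hχvalue a bb, map_mul, map_sum]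
      congr 1
      · rw [hcdef, Complex.conj_ofReal]
      · exact Finset.sum_congr rfl fun k _ => Complex.conj_ofReal _
    have step1 : ∀ x : Fin nB, ((Complex.ofReal rB) * ∑ x1 : Fin nA,
          (starRingEnd ℂ) (χ ((x1, x1), x, x)) * (Complex.ofReal rA))
        = ∑ x1 : Fin nA, ((Complex.ofReal rB) * (Complex.ofReal rA) * c) *
            ∑ k, (Complex.normSq (ψ k (x1, x)) : ℂ) := by
      intro x
      rw [Finset.mul_sum]
      refine Finset.sum_congr rfl fun x1 _ => ?_
      rw [hconj x1 x]
      ring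
    rw [Finset.sum_congr rfl fun x _ => step1 x]
    have step2 : ∑ x : Fin nB, ∑ x1 : Fin nA, ((Complex.ofReal rB) * (Complex.ofReal rA) * c) *
          ∑ k, (Complex.normSq (ψ k (x1, x)) : ℂ)
        = ((Complex.ofReal rB) * (Complex.ofReal rA) * c) *
            ∑ x : Fin nB, ∑ x1 : Fin nA, ∑ k, (Complex.normSq (ψ k (x1, x)) : ℂ) := by
      rw [Finset.mul_sum]
      exact Finset.sum_congr rfl fun x _ => (Finset.mul_sum _ _ _).symm
    rw [step2]
    have step3 : ∑ x : Fin nB, ∑ x1 : Fin nA, ∑ k, (Complex.normSq (ψ k (x1, x)) : ℂ) = (d : ℂ) := by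
      calc ∑ x : Fin nB, ∑ x1 : Fin nA, ∑ k, (Complex.normSq (ψ k (x1, x)) : ℂ)
          = ∑ x1 : Fin nA, ∑ x : Fin nB, ∑ k, (Complex.normSq (ψ k (x1, x)) : ℂ) :=
            Finset.sum_comm
        _ = ∑ x1 : Fin nA, ∑ k, ∑ x : Fin nB, (Complex.normSq (ψ k (x1, x)) : ℂ) :=
            Finset.sum_congr rfl fun x1 _ => Finset.sum_comm
        _ = ∑ k, ∑ x1 : Fin nA, ∑ x : Fin nB, (Complex.normSq (ψ k (x1, x)) : ℂ) :=
            Finset.sum_comm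
        _ = ∑ k : Fin d, (1 : ℂ) := by
            refine Finset.sum_congr rfl fun k _ => ?_
            exact_mod_cast hψnorm k
        _ = (d : ℂ) := by simp
    rw [step3, hcdef]
    push_cast
    ring
  set lam := schmidtSqCoeffs χ with hlam
  have hCS := aux_cs vv (Matrix.mulVec M.conjTranspose uu)
  have hy : ∑ j, Complex.normSq ((Matrix.mulVec M.conjTranspose uu) j)
      = (dotProduct (star uu) (Matrix.mulVec (M * M.conjTranspose) uu)).re := by
    have h1 : dotProduct (star (Matrix.mulVec M.conjTranspose uu)) (Matrix.mulVec M.conjTranspose uu)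
        = dotProduct (star uu) (Matrix.mulVec (M * M.conjTranspose) uu) := by
      rw [Matrix.star_mulVec, ← Matrix.mulVec_mulVec, Matrix.conjTranspose_conjTranspose,
        ← Matrix.dotProduct_mulVec]
    have h2 : dotProduct (star (Matrix.mulVec M.conjTranspose uu)) (Matrix.mulVec M.conjTranspose uu)
        = Complex.ofReal (∑ j, Complex.normSq ((Matrix.mulVec M.conjTranspose uu) j)) := by
      rw [dotProduct, Complex.ofReal_sum]
      exact Finset.sum_congr rfl fun j _ => (Complex.normSq_eq_conj_mul_self).symm
    rw [← h1, h2, Complex.ofReal_re]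
  haveI : Nonempty (Fin nA × Fin nA) := ⟨(⟨0, hA⟩, ⟨0, hA⟩)⟩
  obtain ⟨j0, hj0⟩ := aux_rayleigh (Matrix.isHermitian_mul_conjTranspose_self M) uu hu1
  set t : ℝ := (d : ℝ) / (nA * nB) with ht
  have ht0 : 0 < t := by
    apply div_pos
    · exact_mod_cast hd
    · positivity
  have htval : Complex.normSq (dotProduct (star vv) (Matrix.mulVec M.conjTranspose uu)) = t := by
    rw [hs, Complex.normSq_ofReal]
    have e1 : ((Real.sqrt d)⁻¹ * (d:ℝ)) = Real.sqrt d := by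
      rw [inv_mul_eq_div, Real.div_sqrt]
    have e2 : Real.sqrt nA * Real.sqrt nA = (nA:ℝ) := Real.mul_self_sqrt (le_of_lt hA0)
    have e3 : Real.sqrt nB * Real.sqrt nB = (nB:ℝ) := Real.mul_self_sqrt (le_of_lt hB0)
    have e4 : Real.sqrt d * Real.sqrt d = (d:ℝ) := Real.mul_self_sqrt (by positivity)
    have e5 : (rB * (rA * ((Real.sqrt d)⁻¹ * (d:ℝ)))) * (rB * (rA * ((Real.sqrt d)⁻¹ * (d:ℝ))))
        = (Real.sqrt d * Real.sqrt d) * ((Real.sqrt nA * Real.sqrt nA)⁻¹ * (Real.sqrt nB * Real.sqrt nB)⁻¹) := by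
      rw [e1, hrA, hrB, mul_inv, mul_inv]
      ring
    rw [e5, e2, e3, e4, ht, div_eq_mul_inv, mul_inv]
  have hlamj0 : t ≤ lam j0 := by
    rw [← htval]
    calc Complex.normSq (dotProduct (star vv) (Matrix.mulVec M.conjTranspose uu))
        ≤ (∑ j, Complex.normSq (vv j)) * (∑ j, Complex.normSq ((Matrix.mulVec M.conjTranspose uu) j)) := hCS
      _ = (dotProduct (star uu) (Matrix.mulVec (M * M.conjTranspose) uu)).re := by
          rw [hv1, one_mul, hy]
      _ ≤ lam j0 := hj0
  have hsum_lam : ∑ i, lam i = 1 := aux_schmidt_sum_one χ hnorm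
  have hsum_p : t ^ p ≤ ∑ i, lam i ^ p := by
    calc t ^ p ≤ lam j0 ^ p :=
          Real.rpow_le_rpow (le_of_lt ht0) hlamj0 (by linarith)
      _ ≤ ∑ i, lam i ^ p :=
          Finset.single_le_sum (fun i _ => Real.rpow_nonneg (aux_schmidt_nonneg χ i) p)
            (Finset.mem_univ j0)
  have hrenyi : renyiEnt p χ ≤ (p / (1 - p)) * Real.logb 2 ((d : ℝ) / (nA * nB)) := by
    have hcoef : (1:ℝ) / (1 - p) < 0 := by
      apply div_neg_of_pos_of_neg <;> linarith
    have hlogle : Real.logb 2 (t ^ p) ≤ Real.logb 2 (∑ i, lam i ^ p) :=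
      Real.logb_le_logb_of_le (by norm_num) (Real.rpow_pos_of_pos ht0 p) hsum_p
    have hlogp : Real.logb 2 (t ^ p) = p * Real.logb 2 t := by
      rw [Real.logb, Real.log_rpow ht0, Real.logb]
      ring
    unfold renyiEnt
    calc (1 / (1 - p)) * Real.logb 2 (∑ i, schmidtSqCoeffs χ i ^ p)
        ≤ (1 / (1 - p)) * Real.logb 2 (t ^ p) := by
          apply mul_le_mul_of_nonpos_left _ (le_of_lt hcoef)
          exact hlogle
      _ = (p / (1 - p)) * Real.logb 2 t := by rw [hlogp]; ring
      _ = (p / (1 - p)) * Real.logb 2 ((d : ℝ) / (nA * nB)) := by rw [ht]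
  have hmemS : renyiEnt p χ ∈ {x | ∃ ψ' ∈ tensorSub U (conjSubmodule U), ‖ψ'‖ = 1 ∧ x = renyiEnt p ψ'} :=
    ⟨χ, hmem, hnorm, rfl⟩
  have hbdd : BddBelow {x | ∃ ψ' ∈ tensorSub U (conjSubmodule U), ‖ψ'‖ = 1 ∧ x = renyiEnt p ψ'} := by
    refine ⟨0, fun x hx => ?_⟩
    obtain ⟨ψ', _, hψ'norm, rfl⟩ := hx
    exact aux_renyi_nonneg hp ψ' hψ'norm
  calc hminEnt p (tensorSub U (conjSubmodule U)) ≤ renyiEnt p χ := csInf_le hbdd hmemS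
    _ ≤ (p / (1 - p)) * Real.logb 2 ((d : ℝ) / (nA * nB)) := hrenyi
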